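/- The entropy lower bound chain: for random variables A (with H(A)=Nd), message X with H(X|A)=0 and H(X)=Rd, batches A_1^t,...,A_K^t each of entropy Nd/K and jointly determining A, and batches A_j^{t+1} satisfying H(A_j^{t+1}|A_j^t, X)=0, it holds that Nd ≤ Nd/K + Rd + ∑_{i=1}^{K-1} [Nd/K - I(A_{σ_i}^t ; (A_{σ_{i+1}}^{t+1},...,A_{σ_K}^{t+1}))] for any permutation σ, hence R ≥ (1/d)·∑_{i=1}^{K-1} I(A_{σ_i}^t ; (A_{σ_{i+1}}^{t+1},...,A_{σ_K}^{t+1})). -/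

import Mathlib

open Finset

/-- Shannon entropy (in nats) of a random variable `X` on a finite probability
space with mass function `μ`. -/
noncomputable def ent {Ω : Type*} [Fintype Ω] {α : Type*} [Fintype α] [DecidableEq α]
    (μ : Ω → ℝ) (X : Ω → α) : ℝ :=
  - ∑ a : α, (∑ ω ∈ Finset.univ.filter (fun ω => X ω = a), μ ω) *
      Real.log (∑ ω ∈ Finset.univ.filter (fun ω => X ω = a), μ ω)

/-- Conditional entropy `H(X | Y) = H(X, Y) - H(Y)`. -/
noncomputable def condEnt {Ω : Type*} [Fintype Ω] {α β : Type*}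
    [Fintype α] [DecidableEq α] [Fintype β] [DecidableEq β]
    (μ : Ω → ℝ) (X : Ω → α) (Y : Ω → β) : ℝ :=
  ent μ (fun ω => (X ω, Y ω)) - ent μ Y

/-- Mutual information `I(X ; Y) = H(X) + H(Y) - H(X, Y)`. -/
noncomputable def mutInfo {Ω : Type*} [Fintype Ω] {α β : Type*}
    [Fintype α] [DecidableEq α] [Fintype β] [DecidableEq β]
    (μ : Ω → ℝ) (X : Ω → α) (Y : Ω → β) : ℝ :=
  ent μ X + ent μ Y - ent μ (fun ω => (X ω, Y ω))

namespace Stmt17Aux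

open Real

variable {Ω : Type*} [Fintype Ω] {α γ δ : Type*}

/-- probability mass of `X = a` -/
noncomputable def pm [Fintype α] [DecidableEq α] (μ : Ω → ℝ) (X : Ω → α) (a : α) : ℝ :=
  ∑ ω ∈ Finset.univ.filter (fun ω => X ω = a), μ ω

variable [Fintype α] [DecidableEq α] [Fintype γ] [DecidableEq γ] [Fintype δ] [DecidableEq δ]

lemma ent_eq (μ : Ω → ℝ) (X : Ω → α) :
    ent μ X = - ∑ a : α, pm μ X a * Real.log (pm μ X a) := rfl

lemma pm_nonneg {μ : Ω → ℝ} (hμ0 : ∀ ω, 0 ≤ μ ω) (X : Ω → α) (a : α) : 0 ≤ pm μ X a :=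
  Finset.sum_nonneg fun ω _ => hμ0 ω

lemma sum_pm (μ : Ω → ℝ) (X : Ω → α) : ∑ a, pm μ X a = ∑ ω, μ ω :=
  Finset.sum_fiberwise _ _ _

lemma pm_le_one {μ : Ω → ℝ} (hμ0 : ∀ ω, 0 ≤ μ ω) (hμ1 : ∑ ω, μ ω = 1)
    (X : Ω → α) (a : α) : pm μ X a ≤ 1 := by
  rw [← hμ1, ← sum_pm μ X]
  exact Finset.single_le_sum (fun b _ => pm_nonneg hμ0 X b) (mem_univ a)

lemma pm_comp (μ : Ω → ℝ) (X : Ω → α) (g : α → γ) (c : γ) :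
    pm μ (fun ω => g (X ω)) c = ∑ a ∈ univ.filter (fun a => g a = c), pm μ X a := by
  unfold pm
  rw [← Finset.sum_fiberwise (univ.filter fun ω => g (X ω) = c) X μ, Finset.sum_filter]
  refine Finset.sum_congr rfl fun a _ => ?_
  by_cases h : g a = c
  · rw [if_pos h]
    refine Finset.sum_congr ?_ fun _ _ => rfl
    ext ω
    simp only [Finset.mem_filter, mem_univ, true_and, and_iff_right_iff_imp]
    rintro rfl; exact h
  · rw [if_neg h]
    refine Finset.sum_eq_zero fun ω hω => ?_
    simp only [Finset.mem_filter, mem_univ, true_and] at hω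
    exact absurd (hω.2 ▸ hω.1) h

lemma sum_filter_snd {M : Type*} [AddCommMonoid M] (F : α × γ → M) (v : γ) :
    ∑ x ∈ univ.filter (fun x : α × γ => x.2 = v), F x = ∑ u, F (u, v) := by
  rw [Finset.sum_filter, Fintype.sum_prod_type]
  simp [Finset.sum_ite_eq']

lemma sum_filter_mapsnd {M : Type*} [AddCommMonoid M] (g : γ → δ) (F : α × γ → M) (u : α) (w : δ) :
    ∑ x ∈ univ.filter (fun x : α × γ => (x.1, g x.2) = (u, w)), F x
      = ∑ v ∈ univ.filter (fun v => g v = w), F (u, v) := by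
  rw [Finset.sum_filter, Finset.sum_filter, Fintype.sum_prod_type]
  simp only [Prod.mk.injEq, ite_and]
  simp [Finset.sum_ite_irrel, Finset.sum_ite_eq']

/-- log-sum inequality -/
lemma logSum {ι : Type*} (s : Finset ι) (a b : ι → ℝ) (ha : ∀ i ∈ s, 0 ≤ a i)
    (hab : ∀ i ∈ s, a i ≤ b i) :
    ∑ i ∈ s, a i * (Real.log (b i) - Real.log (a i)) ≤
      (∑ i ∈ s, a i) * (Real.log (∑ i ∈ s, b i) - Real.log (∑ i ∈ s, a i)) := by
  set A := ∑ i ∈ s, a i with hA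
  set B := ∑ i ∈ s, b i with hB
  have hA0 : 0 ≤ A := Finset.sum_nonneg ha
  rcases eq_or_lt_of_le hA0 with h0 | hApos
  · -- A = 0, all a i = 0
    have hz : ∀ i ∈ s, a i = 0 := by
      intro i hi
      exact le_antisymm (h0 ▸ Finset.single_le_sum ha hi) (ha i hi)
    rw [← h0, zero_mul]
    refine le_of_eq (Finset.sum_eq_zero fun i hi => by rw [hz i hi, zero_mul])
  · have hB0 : A ≤ B := Finset.sum_le_sum hab
    have hBpos : 0 < B := lt_of_lt_of_le hApos hB0
    have key : ∀ i ∈ s, a i * (Real.log (b i) - Real.log (a i)) ≤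
        b i * A / B - a i + a i * (Real.log B - Real.log A) := by
      intro i hi
      rcases eq_or_lt_of_le (ha i hi) with h0 | hai
      · rw [← h0]
        have : (0:ℝ) ≤ b i * A / B := by
          have : 0 ≤ b i := le_trans (ha i hi) (hab i hi)
          positivity
        simpa using this
      · have hbi : 0 < b i := lt_of_lt_of_le hai (hab i hi)
        have hx : 0 < b i * A / (B * a i) := by positivity
        have hlog := Real.log_le_sub_one_of_pos hx
        have hexp : Real.log (b i * A / (B * a i)) =
            Real.log (b i) + Real.log A - (Real.log B + Real.log (a i)) := by
          rw [Real.log_div (by positivity) (by positivity),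
              Real.log_mul (ne_of_gt hbi) (ne_of_gt hApos),
              Real.log_mul (ne_of_gt hBpos) (ne_of_gt hai)]
        have := mul_le_mul_of_nonneg_left hlog (le_of_lt hai)
        rw [hexp] at this
        have hval : a i * (b i * A / (B * a i) - 1) = b i * A / B - a i := by
          field_simp
        rw [hval] at this
        nlinarith [this]
    calc ∑ i ∈ s, a i * (Real.log (b i) - Real.log (a i))
        ≤ ∑ i ∈ s, (b i * A / B - a i + a i * (Real.log B - Real.log A)) :=
          Finset.sum_le_sum key
      _ = B * A / B - A + A * (Real.log B - Real.log A) := by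
          rw [Finset.sum_add_distrib, Finset.sum_sub_distrib, ← Finset.sum_div,
            ← Finset.sum_mul, ← Finset.sum_mul]
      _ ≤ A * (Real.log B - Real.log A) := by
          rw [mul_comm B A, mul_div_assoc, div_self (ne_of_gt hBpos), mul_one]
          simp
      _ = A * (Real.log B - Real.log A) := rfl

set_option linter.unusedSectionVars false

lemma ent_comp_le {μ : Ω → ℝ} (hμ0 : ∀ ω, 0 ≤ μ ω) (X : Ω → α) (g : α → γ) :
    ent μ (fun ω => g (X ω)) ≤ ent μ X := by
  rw [ent_eq, ent_eq, neg_le_neg_iff]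
  rw [← Finset.sum_fiberwise univ g (fun a => pm μ X a * Real.log (pm μ X a))]
  refine Finset.sum_le_sum fun c _ => ?_
  rw [pm_comp]
  set q := ∑ a ∈ univ.filter (fun a => g a = c), pm μ X a with hq
  have hq0 : 0 ≤ q := Finset.sum_nonneg fun a _ => pm_nonneg hμ0 X a
  calc ∑ a ∈ univ.filter (fun a => g a = c), pm μ X a * Real.log (pm μ X a)
      ≤ ∑ a ∈ univ.filter (fun a => g a = c), pm μ X a * Real.log q := by
        refine Finset.sum_le_sum fun a ha => ?_
        rcases eq_or_lt_of_le (pm_nonneg hμ0 X a) with h0 | hpos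
        · rw [← h0]; simp
        · refine mul_le_mul_of_nonneg_left ?_ (le_of_lt hpos)
          exact Real.log_le_log hpos
            (Finset.single_le_sum (fun b _ => pm_nonneg hμ0 X b) ha)
    _ = q * Real.log q := by rw [← Finset.sum_mul]

lemma ent_congr_comp {μ : Ω → ℝ} (hμ0 : ∀ ω, 0 ≤ μ ω) {X : Ω → α} {Y : Ω → γ}
    (f : α → γ) (f' : γ → α)
    (hf : ∀ ω, f (X ω) = Y ω) (hf' : ∀ ω, f' (Y ω) = X ω) : ent μ X = ent μ Y := by
  have h1 : ent μ (fun ω => f (X ω)) ≤ ent μ X := ent_comp_le hμ0 X f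
  have h2 : ent μ (fun ω => f' (Y ω)) ≤ ent μ Y := ent_comp_le hμ0 Y f'
  rw [show (fun ω => f (X ω)) = Y from funext hf] at h1
  rw [show (fun ω => f' (Y ω)) = X from funext hf'] at h2
  exact le_antisymm h2 h1

lemma ent_nonneg {μ : Ω → ℝ} (hμ0 : ∀ ω, 0 ≤ μ ω) (hμ1 : ∑ ω, μ ω = 1) (X : Ω → α) :
    0 ≤ ent μ X := by
  rw [ent_eq, neg_nonneg]
  refine Finset.sum_nonpos fun a _ => ?_
  exact mul_nonpos_of_nonneg_of_nonpos (pm_nonneg hμ0 X a)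
    (Real.log_nonpos (pm_nonneg hμ0 X a) (pm_le_one hμ0 hμ1 X a))

lemma condEnt_nonneg {μ : Ω → ℝ} (hμ0 : ∀ ω, 0 ≤ μ ω) (U : Ω → α) (V : Ω → γ) :
    0 ≤ condEnt μ U V := by
  have h : ent μ V ≤ ent μ (fun ω => (U ω, V ω)) :=
    ent_comp_le hμ0 (fun ω => (U ω, V ω)) Prod.snd
  unfold condEnt
  linarith

lemma condEnt_comp_le {μ : Ω → ℝ} (hμ0 : ∀ ω, 0 ≤ μ ω) (Z : Ω → α) (C : Ω → γ) (f : α → δ) :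
    condEnt μ (fun ω => f (Z ω)) C ≤ condEnt μ Z C := by
  have h : ent μ (fun ω => (f (Z ω), C ω)) ≤ ent μ (fun ω => (Z ω, C ω)) :=
    ent_comp_le hμ0 (fun ω => (Z ω, C ω)) (fun p => (f p.1, p.2))
  unfold condEnt
  linarith

lemma ent_pair (μ : Ω → ℝ) (U : Ω → α) (C : Ω → γ) :
    ent μ (fun ω => (U ω, C ω)) = ent μ C + condEnt μ U C := by unfold condEnt; ring

lemma ent_assoc {μ : Ω → ℝ} (hμ0 : ∀ ω, 0 ≤ μ ω) (U : Ω → α) (V : Ω → γ) (C : Ω → δ) :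
    ent μ (fun ω => ((U ω, V ω), C ω)) = ent μ (fun ω => (U ω, (V ω, C ω))) := by
  refine le_antisymm ?_ ?_
  · have h := ent_comp_le hμ0 (fun ω => (U ω, (V ω, C ω))) (fun p => ((p.1, p.2.1), p.2.2))
    simpa using h
  · have h := ent_comp_le hμ0 (fun ω => ((U ω, V ω), C ω)) (fun p => (p.1.1, (p.1.2, p.2)))
    simpa using h

lemma condEnt_pair_split {μ : Ω → ℝ} (hμ0 : ∀ ω, 0 ≤ μ ω)
    (U : Ω → α) (V : Ω → γ) (C : Ω → δ) :
    condEnt μ (fun ω => (U ω, V ω)) C =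
      condEnt μ V C + condEnt μ U (fun ω => (V ω, C ω)) := by
  have h := ent_assoc hμ0 U V C
  simp only [condEnt]
  linarith

lemma condEnt_eq (μ : Ω → ℝ) (U : Ω → α) (V : Ω → γ) :
    condEnt μ U V = ∑ v, ∑ u, pm μ (fun ω => (U ω, V ω)) (u, v) *
      (Real.log (pm μ V v) - Real.log (pm μ (fun ω => (U ω, V ω)) (u, v))) := by
  have hmarg : ∀ v, pm μ V v = ∑ u, pm μ (fun ω => (U ω, V ω)) (u, v) := by
    intro v
    have h := pm_comp μ (fun ω => (U ω, V ω)) Prod.snd v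
    rw [sum_filter_snd] at h
    exact h
  have perv : ∀ v, ∑ u, pm μ (fun ω => (U ω, V ω)) (u, v) *
      (Real.log (pm μ V v) - Real.log (pm μ (fun ω => (U ω, V ω)) (u, v)))
      = pm μ V v * Real.log (pm μ V v)
        - ∑ u, pm μ (fun ω => (U ω, V ω)) (u, v) *
            Real.log (pm μ (fun ω => (U ω, V ω)) (u, v)) := by
    intro v
    simp only [mul_sub]
    rw [Finset.sum_sub_distrib, ← Finset.sum_mul, ← hmarg v]
  calc condEnt μ U V
      = - ∑ x : α × γ, pm μ (fun ω => (U ω, V ω)) x *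
            Real.log (pm μ (fun ω => (U ω, V ω)) x)
        + ∑ v, pm μ V v * Real.log (pm μ V v) := by
        unfold condEnt; rw [ent_eq, ent_eq]; ring
    _ = ∑ v, (pm μ V v * Real.log (pm μ V v)
        - ∑ u, pm μ (fun ω => (U ω, V ω)) (u, v) *
            Real.log (pm μ (fun ω => (U ω, V ω)) (u, v))) := by
        rw [Fintype.sum_prod_type, Finset.sum_comm, Finset.sum_sub_distrib]
        ring
    _ = _ := Finset.sum_congr rfl fun v _ => (perv v).symm

lemma condEnt_mono_cond {μ : Ω → ℝ} (hμ0 : ∀ ω, 0 ≤ μ ω) (U : Ω → α) (V : Ω → γ)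
    (g : γ → δ) :
    condEnt μ U V ≤ condEnt μ U (fun ω => g (V ω)) := by
  rw [condEnt_eq, condEnt_eq]
  have hQ : ∀ u w, pm μ (fun ω => (U ω, g (V ω))) (u, w)
      = ∑ v ∈ univ.filter (fun v => g v = w), pm μ (fun ω => (U ω, V ω)) (u, v) := by
    intro u w
    have h := pm_comp μ (fun ω => (U ω, V ω)) (fun x => (x.1, g x.2)) (u, w)
    rw [sum_filter_mapsnd] at h
    exact h
  have hW : ∀ w, pm μ (fun ω => g (V ω)) w
      = ∑ v ∈ univ.filter (fun v => g v = w), pm μ V v := fun w => pm_comp μ V g w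
  have hmarg : ∀ u v, pm μ (fun ω => (U ω, V ω)) (u, v) ≤ pm μ V v := by
    intro u v
    have h := pm_comp μ (fun ω => (U ω, V ω)) Prod.snd v
    rw [sum_filter_snd] at h
    rw [h]
    exact Finset.single_le_sum (fun u' _ => pm_nonneg hμ0 (fun ω => (U ω, V ω)) (u', v))
      (mem_univ u)
  calc ∑ v, ∑ u, pm μ (fun ω => (U ω, V ω)) (u, v) *
        (Real.log (pm μ V v) - Real.log (pm μ (fun ω => (U ω, V ω)) (u, v)))
      = ∑ u, ∑ v, pm μ (fun ω => (U ω, V ω)) (u, v) *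
        (Real.log (pm μ V v) - Real.log (pm μ (fun ω => (U ω, V ω)) (u, v))) :=
        Finset.sum_comm
    _ = ∑ u, ∑ w, ∑ v ∈ univ.filter (fun v => g v = w),
          pm μ (fun ω => (U ω, V ω)) (u, v) *
          (Real.log (pm μ V v) - Real.log (pm μ (fun ω => (U ω, V ω)) (u, v))) :=
        Finset.sum_congr rfl fun u _ => (Finset.sum_fiberwise univ g _).symm
    _ ≤ ∑ u, ∑ w, pm μ (fun ω => (U ω, g (V ω))) (u, w) *
          (Real.log (pm μ (fun ω => g (V ω)) w)
            - Real.log (pm μ (fun ω => (U ω, g (V ω))) (u, w))) := by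
        refine Finset.sum_le_sum fun u _ => Finset.sum_le_sum fun w _ => ?_
        rw [hQ u w, hW w]
        exact logSum _ _ _ (fun v _ => pm_nonneg hμ0 _ _) (fun v _ => hmarg u v)
    _ = ∑ w, ∑ u, pm μ (fun ω => (U ω, g (V ω))) (u, w) *
          (Real.log (pm μ (fun ω => g (V ω)) w)
            - Real.log (pm μ (fun ω => (U ω, g (V ω))) (u, w))) := Finset.sum_comm

lemma ent_unitconst {μ : Ω → ℝ} (hμ1 : ∑ ω, μ ω = 1) : ent μ (fun _ : Ω => ()) = 0 := by
  rw [ent_eq]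
  have h : pm μ (fun _ : Ω => ()) () = 1 := by
    unfold pm
    rw [Finset.filter_true_of_mem (fun _ _ => rfl)]
    exact hμ1
  simp [h]

lemma condEnt_le_ent {μ : Ω → ℝ} (hμ0 : ∀ ω, 0 ≤ μ ω) (hμ1 : ∑ ω, μ ω = 1)
    (U : Ω → α) (V : Ω → γ) :
    condEnt μ U V ≤ ent μ U := by
  have h := condEnt_mono_cond hμ0 U V (fun _ => ())
  have h2 : condEnt μ U (fun _ : Ω => ()) = ent μ U := by
    unfold condEnt
    rw [ent_unitconst hμ1, sub_zero]
    exact ent_congr_comp hμ0 (fun p => p.1) (fun u => (u, ()))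
      (fun ω => rfl) (fun ω => rfl)
  rw [h2] at h
  exact h

lemma ent_comp_le' {μ : Ω → ℝ} (hμ0 : ∀ ω, 0 ≤ μ ω) {Y : Ω → γ} (X : Ω → α) (g : α → γ)
    (hg : ∀ ω, g (X ω) = Y ω) : ent μ Y ≤ ent μ X := by
  have h := ent_comp_le hμ0 X g
  rwa [show (fun ω => g (X ω)) = Y from funext hg] at h

lemma condEnt_comp_le' {μ : Ω → ℝ} (hμ0 : ∀ ω, 0 ≤ μ ω) {Y : Ω → δ}
    (Z : Ω → α) (C : Ω → γ) (f : α → δ) (hf : ∀ ω, f (Z ω) = Y ω) :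
    condEnt μ Y C ≤ condEnt μ Z C := by
  have h := condEnt_comp_le hμ0 Z C f
  rwa [show (fun ω => f (Z ω)) = Y from funext hf] at h

lemma condEnt_mono_cond' {μ : Ω → ℝ} (hμ0 : ∀ ω, 0 ≤ μ ω) (U : Ω → α) (V : Ω → γ)
    {W : Ω → δ} (g : γ → δ) (hg : ∀ ω, g (V ω) = W ω) :
    condEnt μ U V ≤ condEnt μ U W := by
  have h := condEnt_mono_cond hμ0 U V g
  rwa [show (fun ω => g (V ω)) = W from funext hg] at h

end Stmt17Aux

/-! ### Suffix variables and their structural lemmas -/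

private def Sf {Ω β : Type*} (n : ℕ) (σ : Equiv.Perm (Fin (n+1))) (At : Fin (n+1) → Ω → β)
    (m : ℕ) (ω : Ω) : Fin (n+1) → Option β :=
  fun j => if m ≤ (j : ℕ) then some (At (σ j) ω) else none

private lemma Sf_succ_fun {Ω β : Type*} (n : ℕ) (σ : Equiv.Perm (Fin (n+1)))
    (At : Fin (n+1) → Ω → β) (m : ℕ) (hm : m < n+1) (ω : Ω) :
    (fun j : Fin (n+1) => if (j : ℕ) = m then some (At (σ ⟨m, hm⟩) ω)
        else Sf n σ At (m+1) ω j) = Sf n σ At m ω := by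
  funext j
  simp only [Sf]
  rcases Nat.lt_trichotomy (j : ℕ) m with h | h | h
  · rw [if_neg (by omega), if_neg (by omega), if_neg (by omega)]
  · have hj : j = ⟨m, hm⟩ := Fin.ext h
    subst hj
    rw [if_pos rfl, if_pos (le_refl m)]
  · rw [if_neg (by omega), if_pos (by omega), if_pos (by omega)]

private lemma Sf_drop_fun {Ω β : Type*} (n : ℕ) (σ : Equiv.Perm (Fin (n+1)))
    (At : Fin (n+1) → Ω → β) (m : ℕ) (ω : Ω) :
    (fun j : Fin (n+1) => if (j : ℕ) = m then (none : Option β) else Sf n σ At m ω j)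
      = Sf n σ At (m+1) ω := by
  funext j
  simp only [Sf]
  rcases Nat.lt_trichotomy (j : ℕ) m with h | h | h
  · rw [if_neg (by omega), if_neg (by omega), if_neg (by omega)]
  · rw [if_pos h, if_neg (by omega)]
  · rw [if_neg (by omega), if_pos (by omega), if_pos (by omega)]

private lemma Sf_get {Ω β : Type*} (n : ℕ) (σ : Equiv.Perm (Fin (n+1)))
    (At : Fin (n+1) → Ω → β) (m : ℕ) (hm : m < n+1) (ω : Ω) :
    Sf n σ At m ω ⟨m, hm⟩ = some (At (σ ⟨m, hm⟩) ω) := by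
  simp only [Sf]
  rw [if_pos (le_refl m)]

private lemma Sf_top {Ω β : Type*} (n : ℕ) (σ : Equiv.Perm (Fin (n+1)))
    (At : Fin (n+1) → Ω → β) (ω : Ω) :
    Sf n σ At (n+1) ω = fun _ => (none : Option β) := by
  funext j
  have := j.isLt
  simp only [Sf]
  rw [if_neg (by omega)]

private lemma Sf_zero_fun {Ω β : Type*} (n : ℕ) (σ : Equiv.Perm (Fin (n+1)))
    (At : Fin (n+1) → Ω → β) (b0 : β) (ω : Ω) :
    (fun k => (Sf n σ At 0 ω (σ.symm k)).getD b0) = fun k => At k ω := by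
  funext k
  simp only [Sf]
  rw [if_pos (Nat.zero_le _)]
  simp [Equiv.apply_symm_apply]

private lemma Sf_lt_fun {Ω β : Type*} (n : ℕ) (σ : Equiv.Perm (Fin (n+1)))
    (At1 : Fin (n+1) → Ω → β) (i : Fin (n+1)) (ω : Ω) :
    Sf n σ At1 ((i : ℕ)+1) ω
      = fun j : Fin (n+1) => if i < j then some (At1 (σ j) ω) else none := by
  funext j
  simp only [Sf, Fin.lt_def]
  by_cases h : (i : ℕ) + 1 ≤ (j : ℕ)
  · rw [if_pos h, if_pos (by omega)]
  · rw [if_neg h, if_neg (by omega)]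

/-! ### Induction helpers -/

private lemma teleAux (g c : ℕ → ℝ) : ∀ K : ℕ, (∀ m < K, g m ≤ g (m+1) + c m) →
    g 0 ≤ g K + ∑ m ∈ Finset.range K, c m := by
  intro K
  induction K with
  | zero => intro _; simp
  | succ K ih =>
    intro h
    have h1 := ih (fun m hm => h m (Nat.lt_succ_of_lt hm))
    have h2 := h K (Nat.lt_succ_self K)
    rw [Finset.sum_range_succ]
    linarith

private lemma downAux (P : ℕ → Prop) (K : ℕ) (base : P K)
    (step : ∀ m < K, P (m+1) → P m) :
    ∀ r m, m + r = K → P m := by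
  intro r
  induction r with
  | zero =>
    intro m hm
    have : m = K := by omega
    rwa [this]
  | succ r ih =>
    intro m hm
    exact step m (by omega) (ih (m+1) (by omega))

open Stmt17Aux

/-- The entropy lower bound chain. For `K = n+1` workers:
`H(A) = N·d`; message `X` with `H(X|A) = 0` and `H(X) = R·d`; batches
`A_1^t,…,A_K^t`, each of entropy `N·d/K`, deterministic functions of `A` which
jointly determine `A`; batches `A_j^{t+1}` (deterministic functions of `A`)
satisfying `H(A_j^{t+1} | A_j^t, X) = 0`. Then
`N·d ≤ N·d/K + R·d + ∑_{i=1}^{K-1} [N·d/K - I(A_{σ_i}^t ; (A_{σ_{i+1}}^{t+1},…,A_{σ_K}^{t+1}))]`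
for any permutation `σ`, and hence
`R ≥ (1/d)·∑_{i=1}^{K-1} I(A_{σ_i}^t ; (A_{σ_{i+1}}^{t+1},…,A_{σ_K}^{t+1}))`. -/
theorem stmt17 {Ω αA αX β : Type} [Fintype Ω] [Fintype αA] [DecidableEq αA]
    [Fintype αX] [DecidableEq αX] [Fintype β] [DecidableEq β]
    (μ : Ω → ℝ) (hμ0 : ∀ ω, 0 ≤ μ ω) (hμ1 : ∑ ω, μ ω = 1)
    (n N : ℕ) (d R : ℝ) (hd : 0 < d)
    (A : Ω → αA) (X : Ω → αX) (At At1 : Fin (n + 1) → Ω → β)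
    (hA : ent μ A = N * d)
    (hXA : condEnt μ X A = 0)
    (hX : ent μ X = R * d)
    (hAtA : ∀ k, condEnt μ (At k) A = 0)
    (hAt1A : ∀ k, condEnt μ (At1 k) A = 0)
    (hentAt : ∀ k, ent μ (At k) = (N : ℝ) * d / (n + 1))
    (hjoint : condEnt μ A (fun ω => fun k : Fin (n + 1) => At k ω) = 0)
    (hdec : ∀ k, condEnt μ (At1 k) (fun ω => (At k ω, X ω)) = 0)
    (σ : Equiv.Perm (Fin (n + 1))) :
    ((N : ℝ) * d ≤ (N : ℝ) * d / (n + 1) + R * d +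
      ∑ i ∈ Finset.univ.filter (fun i => i ≠ Fin.last n),
        ((N : ℝ) * d / (n + 1) -
          mutInfo μ (At (σ i))
            (fun ω => fun j : Fin (n + 1) =>
              if i < j then some (At1 (σ j) ω) else none))) ∧
    R ≥ (1 / d) *
      ∑ i ∈ Finset.univ.filter (fun i => i ≠ Fin.last n),
        mutInfo μ (At (σ i))
          (fun ω => fun j : Fin (n + 1) =>
            if i < j then some (At1 (σ j) ω) else none) := by
  classical
  have hKpos : (0:ℝ) < (n:ℝ) + 1 := by positivity
  have hΩ : Nonempty Ω := by
    by_contra h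
    rw [not_nonempty_iff] at h
    rw [Finset.univ_eq_empty, Finset.sum_empty] at hμ1
    norm_num at hμ1
  obtain ⟨ω₀⟩ := hΩ
  set b0 : β := At 0 ω₀ with hb0
  -- the key zero-conditional-entropy fact about the (t+1)-suffixes
  have hQzero : ∀ m, m ≤ n + 1 →
      condEnt μ (Sf n σ At1 m) (fun ω => (Sf n σ At m ω, X ω)) = 0 := by
    have base : condEnt μ (Sf n σ At1 (n+1)) (fun ω => (Sf n σ At (n+1) ω, X ω)) = 0 := by
      refine le_antisymm ?_ (condEnt_nonneg hμ0 _ _)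
      rw [show Sf n σ At1 (n+1) = (fun _ : Ω => fun _ : Fin (n+1) => (none : Option β))
        from funext fun ω => Sf_top n σ At1 ω]
      have h : ent μ (fun ω => ((fun _ : Fin (n+1) => (none : Option β)),
          (Sf n σ At (n+1) ω, X ω))) ≤ ent μ (fun ω => (Sf n σ At (n+1) ω, X ω)) :=
        ent_comp_le' hμ0 _ (fun x => ((fun _ : Fin (n+1) => (none : Option β)), x))
          (fun ω => rfl)
      simp only [condEnt]
      linarith
    have step : ∀ m, m < n + 1 →
        condEnt μ (Sf n σ At1 (m+1)) (fun ω => (Sf n σ At (m+1) ω, X ω)) = 0 →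
        condEnt μ (Sf n σ At1 m) (fun ω => (Sf n σ At m ω, X ω)) = 0 := by
      intro m hm IH
      refine le_antisymm ?_ (condEnt_nonneg hμ0 _ _)
      have h1 : condEnt μ (Sf n σ At1 m) (fun ω => (Sf n σ At m ω, X ω))
          ≤ condEnt μ (fun ω => (At1 (σ ⟨m, hm⟩) ω, Sf n σ At1 (m+1) ω))
              (fun ω => (Sf n σ At m ω, X ω)) :=
        condEnt_comp_le' hμ0 _ _
          (fun p => fun j : Fin (n+1) => if (j : ℕ) = m then some p.1 else p.2 j)
          (fun ω => by dsimp only; rw [Sf_succ_fun n σ At1 m hm ω])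
      have h2 : condEnt μ (fun ω => (At1 (σ ⟨m, hm⟩) ω, Sf n σ At1 (m+1) ω))
            (fun ω => (Sf n σ At m ω, X ω))
          = condEnt μ (Sf n σ At1 (m+1)) (fun ω => (Sf n σ At m ω, X ω))
            + condEnt μ (At1 (σ ⟨m, hm⟩))
                (fun ω => (Sf n σ At1 (m+1) ω, (Sf n σ At m ω, X ω))) :=
        condEnt_pair_split hμ0 _ _ _
      have h3 : condEnt μ (Sf n σ At1 (m+1)) (fun ω => (Sf n σ At m ω, X ω))
          ≤ condEnt μ (Sf n σ At1 (m+1)) (fun ω => (Sf n σ At (m+1) ω, X ω)) :=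
        condEnt_mono_cond' hμ0 _ _
          (fun p => ((fun j : Fin (n+1) => if (j : ℕ) = m then (none : Option β)
            else p.1 j), p.2))
          (fun ω => by dsimp only; rw [Sf_drop_fun n σ At m ω])
      have h4 : condEnt μ (At1 (σ ⟨m, hm⟩))
            (fun ω => (Sf n σ At1 (m+1) ω, (Sf n σ At m ω, X ω)))
          ≤ condEnt μ (At1 (σ ⟨m, hm⟩)) (fun ω => (At (σ ⟨m, hm⟩) ω, X ω)) :=
        condEnt_mono_cond' hμ0 _ _
          (fun p => ((p.2.1 ⟨m, hm⟩).getD b0, p.2.2))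
          (fun ω => by dsimp only; rw [Sf_get n σ At m hm ω]; simp)
      have h5 := hdec (σ ⟨m, hm⟩)
      linarith
    intro m hm
    exact downAux (fun m => condEnt μ (Sf n σ At1 m)
      (fun ω => (Sf n σ At m ω, X ω)) = 0) (n+1) base step (n+1-m) m (by omega)
  -- telescoping of the entropy of the t-suffixes
  set cT : ℕ → ℝ := fun m => condEnt μ (At (σ ⟨min m n, by omega⟩))
    (fun ω => (Sf n σ At (m+1) ω, X ω)) with hcdef
  have htel : ent μ (fun ω => (Sf n σ At 0 ω, X ω))
      ≤ ent μ (fun ω => (Sf n σ At (n+1) ω, X ω)) + ∑ m ∈ Finset.range (n+1), cT m := by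
    refine teleAux (fun m => ent μ (fun ω => (Sf n σ At m ω, X ω))) cT (n+1) ?_
    intro m hm
    have hmk : (⟨min m n, by omega⟩ : Fin (n+1)) = ⟨m, hm⟩ := by
      apply Fin.ext
      show min m n = m
      exact Nat.min_eq_left (by omega)
    have h1 : ent μ (fun ω => (Sf n σ At m ω, X ω))
        ≤ ent μ (fun ω => (At (σ ⟨m, hm⟩) ω, (Sf n σ At (m+1) ω, X ω))) :=
      ent_comp_le' hμ0 _
        (fun p => ((fun j : Fin (n+1) => if (j : ℕ) = m then some p.1 else p.2.1 j), p.2.2))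
        (fun ω => by dsimp only; rw [Sf_succ_fun n σ At m hm ω])
    have h2 : ent μ (fun ω => (At (σ ⟨m, hm⟩) ω, (Sf n σ At (m+1) ω, X ω)))
        = ent μ (fun ω => (Sf n σ At (m+1) ω, X ω))
          + condEnt μ (At (σ ⟨m, hm⟩)) (fun ω => (Sf n σ At (m+1) ω, X ω)) :=
      ent_pair μ _ _
    have h3 : cT m = condEnt μ (At (σ ⟨m, hm⟩)) (fun ω => (Sf n σ At (m+1) ω, X ω)) := by
      simp only [hcdef]
      rw [hmk]
    rw [h3]
    linarith
  -- start: H(A) ≤ H(S_0, X)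
  have hstart : ent μ A ≤ ent μ (fun ω => (Sf n σ At 0 ω, X ω)) := by
    have h1 : ent μ A ≤ ent μ (fun ω => (A ω, (Sf n σ At 0 ω, X ω))) := by
      have h := ent_comp_le hμ0 (fun ω => (A ω, (Sf n σ At 0 ω, X ω))) Prod.fst
      exact h
    have h2 : ent μ (fun ω => (A ω, (Sf n σ At 0 ω, X ω)))
        = ent μ (fun ω => (Sf n σ At 0 ω, X ω))
          + condEnt μ A (fun ω => (Sf n σ At 0 ω, X ω)) := ent_pair μ _ _
    have h3 : condEnt μ A (fun ω => (Sf n σ At 0 ω, X ω))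
        ≤ condEnt μ A (fun ω => fun k : Fin (n + 1) => At k ω) :=
      condEnt_mono_cond' hμ0 _ _
        (fun p => fun k : Fin (n+1) => (p.1 (σ.symm k)).getD b0)
        (fun ω => by dsimp only; rw [Sf_zero_fun n σ At b0 ω])
    rw [hjoint] at h3
    linarith
  -- end: H(S_{n+1}, X) ≤ H(X) = R d
  have hend : ent μ (fun ω => (Sf n σ At (n+1) ω, X ω)) ≤ R * d := by
    have h : ent μ (fun ω => (Sf n σ At (n+1) ω, X ω)) ≤ ent μ X :=
      ent_comp_le' hμ0 X (fun x => ((fun _ : Fin (n+1) => (none : Option β)), x))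
        (fun ω => by rw [Sf_top n σ At ω])
    rw [hX] at h
    exact h
  -- last telescoping term
  have hlast : cT n ≤ (N : ℝ) * d / ((n : ℝ) + 1) := by
    simp only [hcdef]
    exact le_trans (condEnt_le_ent hμ0 hμ1 _ _) (le_of_eq (hentAt _))
  -- per-index bound: c_i ≤ N d/(n+1) - I(At_{σ i} ; Q_i)
  have perI : ∀ i' : Fin (n+1), cT (i' : ℕ) ≤ (N : ℝ) * d / ((n : ℝ) + 1)
      - mutInfo μ (At (σ i'))
          (fun ω => fun j : Fin (n + 1) => if i' < j then some (At1 (σ j) ω) else none) := by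
    intro i'
    have hm : (i' : ℕ) < n + 1 := i'.isLt
    have hmk : (⟨min (i' : ℕ) n, by omega⟩ : Fin (n+1)) = i' := by
      apply Fin.ext
      show min (i' : ℕ) n = (i' : ℕ)
      exact Nat.min_eq_left (by omega)
    have hc1 : cT (i' : ℕ)
        = condEnt μ (At (σ i')) (fun ω => (Sf n σ At ((i' : ℕ)+1) ω, X ω)) := by
      simp only [hcdef]
      rw [hmk]
    have e1 : condEnt μ (At (σ i')) (fun ω => (Sf n σ At ((i' : ℕ)+1) ω, X ω))
        ≤ condEnt μ (fun ω => (At (σ i') ω, Sf n σ At1 ((i' : ℕ)+1) ω))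
            (fun ω => (Sf n σ At ((i' : ℕ)+1) ω, X ω)) :=
      condEnt_comp_le' hμ0 _ _ Prod.fst (fun ω => rfl)
    have e2 : condEnt μ (fun ω => (At (σ i') ω, Sf n σ At1 ((i' : ℕ)+1) ω))
          (fun ω => (Sf n σ At ((i' : ℕ)+1) ω, X ω))
        = condEnt μ (Sf n σ At1 ((i' : ℕ)+1)) (fun ω => (Sf n σ At ((i' : ℕ)+1) ω, X ω))
          + condEnt μ (At (σ i'))
              (fun ω => (Sf n σ At1 ((i' : ℕ)+1) ω, (Sf n σ At ((i' : ℕ)+1) ω, X ω))) :=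
      condEnt_pair_split hμ0 _ _ _
    have e3 : condEnt μ (Sf n σ At1 ((i' : ℕ)+1))
        (fun ω => (Sf n σ At ((i' : ℕ)+1) ω, X ω)) = 0 := hQzero ((i' : ℕ)+1) (by omega)
    have e4 : condEnt μ (At (σ i'))
          (fun ω => (Sf n σ At1 ((i' : ℕ)+1) ω, (Sf n σ At ((i' : ℕ)+1) ω, X ω)))
        ≤ condEnt μ (At (σ i')) (Sf n σ At1 ((i' : ℕ)+1)) :=
      condEnt_mono_cond' hμ0 _ _ Prod.fst (fun ω => rfl)
    have e5 : condEnt μ (At (σ i')) (Sf n σ At1 ((i' : ℕ)+1))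
        = ent μ (At (σ i')) - mutInfo μ (At (σ i')) (Sf n σ At1 ((i' : ℕ)+1)) := by
      simp only [condEnt, mutInfo]
      ring
    have e6 : mutInfo μ (At (σ i')) (Sf n σ At1 ((i' : ℕ)+1))
        = mutInfo μ (At (σ i'))
            (fun ω => fun j : Fin (n + 1) => if i' < j then some (At1 (σ j) ω) else none) := by
      exact congrArg _ (funext fun ω => Sf_lt_fun n σ At1 i' ω)
    have e7 := hentAt (σ i')
    rw [hc1]
    rw [e7] at e5
    linarith [e1, le_of_eq e2, e3, e4, le_of_eq e5, le_of_eq e6]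
  -- sum over the filtered index set
  have hfilter : ∀ F : Fin (n+1) → ℝ,
      ∑ i ∈ Finset.univ.filter (fun i => i ≠ Fin.last n), F i
        = ∑ i : Fin n, F i.castSucc := by
    intro F
    rw [Finset.filter_ne']
    have h1 := Finset.sum_erase_add Finset.univ F (Finset.mem_univ (Fin.last n))
    have h2 := Fin.sum_univ_castSucc F
    linarith
  -- main Fin-level inequality
  have main : (N : ℝ) * d ≤ (N : ℝ) * d / ((n : ℝ) + 1) + R * d +
      ∑ i : Fin n, ((N : ℝ) * d / ((n : ℝ) + 1) -
        mutInfo μ (At (σ i.castSucc))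
          (fun ω => fun j : Fin (n + 1) =>
            if i.castSucc < j then some (At1 (σ j) ω) else none)) := by
    have hsplit : ∑ m ∈ Finset.range (n+1), cT m
        = ∑ m ∈ Finset.range n, cT m + cT n := Finset.sum_range_succ cT n
    have hrange : ∑ i : Fin n, cT (i : ℕ) = ∑ m ∈ Finset.range n, cT m :=
      Fin.sum_univ_eq_sum_range cT n
    have hbd : ∑ i : Fin n, cT (i : ℕ)
        ≤ ∑ i : Fin n, ((N : ℝ) * d / ((n : ℝ) + 1) -
            mutInfo μ (At (σ i.castSucc))
              (fun ω => fun j : Fin (n + 1) =>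
                if i.castSucc < j then some (At1 (σ j) ω) else none)) := by
      refine Finset.sum_le_sum fun i _ => ?_
      have h := perI i.castSucc
      rwa [Fin.coe_castSucc] at h
    linarith [hstart, htel, hend, hlast, hA]
  have hsum1 : ∑ i ∈ Finset.univ.filter (fun i => i ≠ Fin.last n),
        ((N : ℝ) * d / (n + 1) -
          mutInfo μ (At (σ i))
            (fun ω => fun j : Fin (n + 1) =>
              if i < j then some (At1 (σ j) ω) else none))
      = ∑ i : Fin n, ((N : ℝ) * d / ((n : ℝ) + 1) -
          mutInfo μ (At (σ i.castSucc))
            (fun ω => fun j : Fin (n + 1) =>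
              if i.castSucc < j then some (At1 (σ j) ω) else none)) := hfilter _
  have hsum2 : ∑ i ∈ Finset.univ.filter (fun i => i ≠ Fin.last n),
        mutInfo μ (At (σ i))
          (fun ω => fun j : Fin (n + 1) =>
            if i < j then some (At1 (σ j) ω) else none)
      = ∑ i : Fin n, mutInfo μ (At (σ i.castSucc))
          (fun ω => fun j : Fin (n + 1) =>
            if i.castSucc < j then some (At1 (σ j) ω) else none) := hfilter _
  have goal1 : (N : ℝ) * d ≤ (N : ℝ) * d / (n + 1) + R * d +
      ∑ i ∈ Finset.univ.filter (fun i => i ≠ Fin.last n),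
        ((N : ℝ) * d / (n + 1) -
          mutInfo μ (At (σ i))
            (fun ω => fun j : Fin (n + 1) =>
              if i < j then some (At1 (σ j) ω) else none)) := by
    rw [hsum1]
    exact main
  refine ⟨goal1, ?_⟩
  -- second claim
  have hyc : ∑ i : Fin n, ((N : ℝ) * d / ((n : ℝ) + 1) -
        mutInfo μ (At (σ i.castSucc))
          (fun ω => fun j : Fin (n + 1) =>
            if i.castSucc < j then some (At1 (σ j) ω) else none))
      = (n : ℝ) * ((N : ℝ) * d / ((n : ℝ) + 1))
        - ∑ i : Fin n, mutInfo μ (At (σ i.castSucc))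
            (fun ω => fun j : Fin (n + 1) =>
              if i.castSucc < j then some (At1 (σ j) ω) else none) := by
    rw [Finset.sum_sub_distrib, Finset.sum_const, Finset.card_univ, Fintype.card_fin,
      nsmul_eq_mul]
  have hy : (n : ℝ) * ((N : ℝ) * d / ((n : ℝ) + 1)) + (N : ℝ) * d / ((n : ℝ) + 1)
      = (N : ℝ) * d := by
    field_simp
  have hIle : ∑ i : Fin n, mutInfo μ (At (σ i.castSucc))
      (fun ω => fun j : Fin (n + 1) =>
        if i.castSucc < j then some (At1 (σ j) ω) else none) ≤ R * d := by
    linarith [main, hyc, hy]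
  rw [ge_iff_le, hsum2]
  have h2d : (1 / d) * (∑ i : Fin n, mutInfo μ (At (σ i.castSucc))
      (fun ω => fun j : Fin (n + 1) =>
        if i.castSucc < j then some (At1 (σ j) ω) else none)) ≤ (1 / d) * (R * d) :=
    mul_le_mul_of_nonneg_left hIle (by positivity)
  have h3d : (1 / d) * (R * d) = R := by
    field_simp
  linarith
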